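/- Let M : ℝ^{mp} → A^n be a linear map into the space A^n of real symmetric n×n matrices (identified with ℝ^{n(n+1)/2} via the entries on and above the diagonal, with the Euclidean norm) that is Lipschitz with Lipschitz constant C_M with respect to the Euclidean norms, and let f : ℝ → ℝ be convex and Lipschitz with Lipschitz constant ‖f‖_L. Then the function T : ℝ^{mp} → ℝ defined by T(y) = F_{M(y)/√m}(f) is convex (hence quasi-convex) and Lipschitz with Lipschitz constant at most √(2/(nm)) · C_M · ‖f‖_L. -/

import Mathlib

open scoped Matrix NNReal

/-- Spectral distribution integral `F_M(f) = (1/n) ∑_i f(λ_i(M))` of a symmetric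
(Hermitian) real matrix `M`; junk value `0` for non-Hermitian matrices. -/
noncomputable def specInt {ι : Type*} [Fintype ι] [DecidableEq ι]
    (M : Matrix ι ι ℝ) (f : ℝ → ℝ) : ℝ :=
  if h : M.IsHermitian then (∑ i, f (h.eigenvalues i)) / (Fintype.card ι) else 0

open scoped Classical in
/-- The Euclidean norm of a symmetric `n × n` matrix under the identification with
`ℝ^{n(n+1)/2}` obtained by collecting the entries on and above the diagonal. -/
noncomputable def symEuclNorm {n : ℕ} (A : Matrix (Fin n) (Fin n) ℝ) : ℝ :=
  Real.sqrt (∑ q ∈ Finset.univ.filter (fun q : Fin n × Fin n => q.1 ≤ q.2), (A q.1 q.2) ^ 2)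

section Aux

variable {n : ℕ}

private lemma herm_smul {c : ℝ} {A : Matrix (Fin n) (Fin n) ℝ} (hA : A.IsHermitian) :
    (c • A).IsHermitian := by
  unfold Matrix.IsHermitian at *
  rw [Matrix.conjTranspose_smul, hA]
  simp

private lemma unitary_col_sq {U : Matrix (Fin n) (Fin n) ℝ}
    (hU : U ∈ Matrix.unitaryGroup (Fin n) ℝ) (i : Fin n) :
    ∑ j, (U j i) ^ 2 = 1 := by
  have h : star U * U = 1 := Matrix.mem_unitaryGroup_iff'.mp hU
  have h2 := congrFun (congrFun h i) i
  simpa [Matrix.mul_apply, Matrix.star_apply, pow_two, Matrix.one_apply] using h2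

private lemma unitary_row_sq {U : Matrix (Fin n) (Fin n) ℝ}
    (hU : U ∈ Matrix.unitaryGroup (Fin n) ℝ) (j : Fin n) :
    ∑ i, (U j i) ^ 2 = 1 := by
  have h : U * star U = 1 := Matrix.mem_unitaryGroup_iff.mp hU
  have h2 := congrFun (congrFun h j) j
  simpa [Matrix.mul_apply, Matrix.star_apply, pow_two, Matrix.one_apply] using h2

private lemma star_mul_self_mul_eq_diag' {A : Matrix (Fin n) (Fin n) ℝ} (hA : A.IsHermitian) :
    star (hA.eigenvectorUnitary : Matrix (Fin n) (Fin n) ℝ) * A *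
      (hA.eigenvectorUnitary : Matrix (Fin n) (Fin n) ℝ)
      = Matrix.diagonal (RCLike.ofReal ∘ hA.eigenvalues) := by
  have h := hA.conjStarAlgAut_star_eigenvectorUnitary
  rw [Unitary.conjStarAlgAut_apply, Unitary.coe_star, star_star] at h
  exact h

private lemma diag_entry_eig {A : Matrix (Fin n) (Fin n) ℝ} (hA : A.IsHermitian) (i : Fin n) :
    (star (hA.eigenvectorUnitary : Matrix (Fin n) (Fin n) ℝ) * A *
      (hA.eigenvectorUnitary : Matrix (Fin n) (Fin n) ℝ)) i i = hA.eigenvalues i := by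
  rw [star_mul_self_mul_eq_diag' hA]
  simp

/-- Jensen / Schur–Horn type inequality: for any unitary `U`,
`∑ i f((U* A U)_{ii}) ≤ ∑ i f(λ_i(A))` when `f` is convex. -/
private lemma jensen_diag {f : ℝ → ℝ} (hconv : ConvexOn ℝ Set.univ f)
    {A : Matrix (Fin n) (Fin n) ℝ} (hA : A.IsHermitian)
    {U : Matrix (Fin n) (Fin n) ℝ} (hU : U ∈ Matrix.unitaryGroup (Fin n) ℝ) :
    ∑ i, f ((star U * A * U) i i) ≤ ∑ i, f (hA.eigenvalues i) := by
  set V : Matrix (Fin n) (Fin n) ℝ := (hA.eigenvectorUnitary : Matrix (Fin n) (Fin n) ℝ) with hVdef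
  have hVmem : V ∈ Matrix.unitaryGroup (Fin n) ℝ := hA.eigenvectorUnitary.2
  set W : Matrix (Fin n) (Fin n) ℝ := star V * U with hWdef
  have hWmem : W ∈ Matrix.unitaryGroup (Fin n) ℝ := mul_mem (Unitary.star_mem hVmem) hU
  have h1 : V * star V = 1 := Matrix.mem_unitaryGroup_iff.mp hVmem
  have hdiag : star V * A * V = Matrix.diagonal hA.eigenvalues := by
    have h := star_mul_self_mul_eq_diag' hA
    have h2 : (RCLike.ofReal ∘ hA.eigenvalues : Fin n → ℝ) = hA.eigenvalues := by
      funext j; simp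
    rw [h, h2]
  have hAeq : A = V * Matrix.diagonal hA.eigenvalues * star V := by
    have : V * (star V * A * V) * star V = A := by
      simp only [← Matrix.mul_assoc]
      rw [h1, Matrix.one_mul, Matrix.mul_assoc, h1, Matrix.mul_one]
    rw [hdiag] at this
    exact this.symm
  have hsw : star W = star U * V := by rw [hWdef, star_mul, star_star]
  have hconj : star U * A * U = star W * Matrix.diagonal hA.eigenvalues * W := by
    have h2 : star W * Matrix.diagonal hA.eigenvalues * W
        = star U * (V * Matrix.diagonal hA.eigenvalues * star V) * U := by
      rw [hsw, hWdef]
      simp only [Matrix.mul_assoc]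
    rw [h2, ← hAeq]
  have hentry : ∀ i, (star U * A * U) i i = ∑ j, (W j i) ^ 2 * hA.eigenvalues j := by
    intro i
    rw [hconj, Matrix.mul_apply]
    refine Finset.sum_congr rfl fun k _ => ?_
    rw [Matrix.mul_diagonal, Matrix.star_apply]
    simp [pow_two]
    ring
  calc ∑ i, f ((star U * A * U) i i)
      = ∑ i, f (∑ j, (W j i) ^ 2 • hA.eigenvalues j) := by
        refine Finset.sum_congr rfl fun i _ => ?_
        rw [hentry i]
        simp [smul_eq_mul]
    _ ≤ ∑ i, ∑ j, (W j i) ^ 2 * f (hA.eigenvalues j) := by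
        refine Finset.sum_le_sum fun i _ => ?_
        have := hconv.map_sum_le (t := Finset.univ) (w := fun j => (W j i) ^ 2)
          (p := fun j => hA.eigenvalues j)
          (fun j _ => sq_nonneg _) (unitary_col_sq hWmem i) (fun j _ => Set.mem_univ _)
        simpa [smul_eq_mul] using this
    _ = ∑ j, (∑ i, (W j i) ^ 2) * f (hA.eigenvalues j) := by
        rw [Finset.sum_comm]
        simp [Finset.sum_mul]
    _ = ∑ j, f (hA.eigenvalues j) := by
        refine Finset.sum_congr rfl fun j _ => ?_
        rw [unitary_row_sq hWmem j, one_mul]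

/-- The squared Frobenius norm. -/
private def frobSq (X : Matrix (Fin n) (Fin n) ℝ) : ℝ := ∑ i, ∑ j, (X i j) ^ 2

private lemma frobSq_nonneg (X : Matrix (Fin n) (Fin n) ℝ) : 0 ≤ frobSq X := by
  unfold frobSq; positivity

private lemma frobSq_eq_trace (Y : Matrix (Fin n) (Fin n) ℝ) :
    frobSq Y = Matrix.trace (Y * star Y) := by
  simp [frobSq, Matrix.trace, Matrix.diag, Matrix.mul_apply, Matrix.star_apply, pow_two]

private lemma frobSq_conj {U : Matrix (Fin n) (Fin n) ℝ}
    (hU : U ∈ Matrix.unitaryGroup (Fin n) ℝ) (X : Matrix (Fin n) (Fin n) ℝ) :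
    frobSq (star U * X * U) = frobSq X := by
  have h1 : U * star U = 1 := Matrix.mem_unitaryGroup_iff.mp hU
  rw [frobSq_eq_trace, frobSq_eq_trace]
  have key : (star U * X * U) * star (star U * X * U) = star U * (X * star X) * U := by
    rw [star_mul, star_mul, star_star]
    simp only [Matrix.mul_assoc]
    rw [show U * (star U * (star X * U)) = star X * U by
      rw [← Matrix.mul_assoc, h1, Matrix.one_mul]]
  rw [key]
  rw [Matrix.trace_mul_comm, ← Matrix.mul_assoc, ← Matrix.mul_assoc, h1, Matrix.one_mul]

private lemma frobSq_neg (X : Matrix (Fin n) (Fin n) ℝ) : frobSq (-X) = frobSq X := by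
  simp [frobSq]

private lemma frobSq_smul (c : ℝ) (X : Matrix (Fin n) (Fin n) ℝ) :
    frobSq (c • X) = c ^ 2 * frobSq X := by
  simp [frobSq, Matrix.smul_apply, mul_pow, Finset.mul_sum, smul_eq_mul]

/-- One-sided Lipschitz estimate on sums of `f` of eigenvalues. -/
private lemma sum_f_le {f : ℝ → ℝ} {L : ℝ≥0} (hconv : ConvexOn ℝ Set.univ f)
    (hlip : LipschitzWith L f) {A B : Matrix (Fin n) (Fin n) ℝ}
    (hA : A.IsHermitian) (hB : B.IsHermitian) :
    ∑ i, f (hA.eigenvalues i) ≤ ∑ i, f (hB.eigenvalues i)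
      + L * (Real.sqrt n * Real.sqrt (frobSq (A - B))) := by
  set U : Matrix (Fin n) (Fin n) ℝ := (hA.eigenvectorUnitary : Matrix (Fin n) (Fin n) ℝ)
    with hUdef
  have hU : U ∈ Matrix.unitaryGroup (Fin n) ℝ := hA.eigenvectorUnitary.2
  set d : Fin n → ℝ := fun i => (star U * (A - B) * U) i i with hd
  have hsub : star U * (A - B) * U = star U * A * U - star U * B * U := by
    rw [Matrix.mul_sub, Matrix.sub_mul]
  have hsplit : ∀ i, (star U * A * U) i i = (star U * B * U) i i + d i := by
    intro i
    simp [hd, hsub, Matrix.sub_apply]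
  have step1 : ∀ i, f (hA.eigenvalues i) ≤ f ((star U * B * U) i i) + L * |d i| := by
    intro i
    have hl := hlip.dist_le_mul ((star U * B * U) i i + d i) ((star U * B * U) i i)
    rw [Real.dist_eq, Real.dist_eq, add_sub_cancel_left] at hl
    have habs : f ((star U * B * U) i i + d i) - f ((star U * B * U) i i)
        ≤ (L : ℝ) * |d i| := le_trans (le_abs_self _) hl
    have he : hA.eigenvalues i = (star U * B * U) i i + d i := by
      rw [← diag_entry_eig hA i, hsplit i]
    rw [he]
    linarith
  have jB : ∑ i, f ((star U * B * U) i i) ≤ ∑ i, f (hB.eigenvalues i) :=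
    jensen_diag hconv hB hU
  have hds : ∑ i, (d i) ^ 2 ≤ frobSq (A - B) := by
    rw [← frobSq_conj hU (A - B)]
    unfold frobSq
    refine Finset.sum_le_sum fun i _ => ?_
    exact Finset.single_le_sum (f := fun j => ((star U * (A - B) * U) i j) ^ 2)
      (fun j _ => sq_nonneg _) (Finset.mem_univ i)
  have hcs : ∑ i, |d i| ≤ Real.sqrt n * Real.sqrt (frobSq (A - B)) := by
    have h1 : (∑ i, |d i|) ^ 2 ≤ (n : ℝ) * ∑ i, (d i) ^ 2 := by
      have := sq_sum_le_card_mul_sum_sq (s := (Finset.univ : Finset (Fin n)))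
        (f := fun i => |d i|)
      simpa [sq_abs] using this
    calc ∑ i, |d i| = Real.sqrt ((∑ i, |d i|) ^ 2) := by
          rw [Real.sqrt_sq (by positivity)]
      _ ≤ Real.sqrt ((n : ℝ) * frobSq (A - B)) := by
          apply Real.sqrt_le_sqrt
          exact h1.trans (mul_le_mul_of_nonneg_left hds (Nat.cast_nonneg n))
      _ = Real.sqrt n * Real.sqrt (frobSq (A - B)) := Real.sqrt_mul (Nat.cast_nonneg n) _
  calc ∑ i, f (hA.eigenvalues i)
      ≤ ∑ i, (f ((star U * B * U) i i) + L * |d i|) :=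
        Finset.sum_le_sum fun i _ => step1 i
    _ = ∑ i, f ((star U * B * U) i i) + L * ∑ i, |d i| := by
        rw [Finset.sum_add_distrib, Finset.mul_sum]
    _ ≤ ∑ i, f (hB.eigenvalues i) + L * (Real.sqrt n * Real.sqrt (frobSq (A - B))) := by
        have hL : (0 : ℝ) ≤ L := L.coe_nonneg
        have := mul_le_mul_of_nonneg_left hcs hL
        linarith

/-- Convexity of the sum of `f` of eigenvalues. -/
private lemma sum_f_combo {f : ℝ → ℝ} (hconv : ConvexOn ℝ Set.univ f)
    {A B : Matrix (Fin n) (Fin n) ℝ} (hA : A.IsHermitian) (hB : B.IsHermitian)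
    {a b : ℝ} (ha : 0 ≤ a) (hb : 0 ≤ b) (hab : a + b = 1)
    (hC : (a • A + b • B).IsHermitian) :
    ∑ i, f (hC.eigenvalues i)
      ≤ a * ∑ i, f (hA.eigenvalues i) + b * ∑ i, f (hB.eigenvalues i) := by
  set U : Matrix (Fin n) (Fin n) ℝ := (hC.eigenvectorUnitary : Matrix (Fin n) (Fin n) ℝ)
  have hU : U ∈ Matrix.unitaryGroup (Fin n) ℝ := hC.eigenvectorUnitary.2
  have hCeig : ∀ i, hC.eigenvalues i
      = a * (star U * A * U) i i + b * (star U * B * U) i i := by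
    intro i
    have h1 : star U * (a • A + b • B) * U
        = a • (star U * A * U) + b • (star U * B * U) := by
      rw [Matrix.mul_add, Matrix.add_mul]
      simp [Matrix.mul_smul, Matrix.smul_mul]
    rw [← diag_entry_eig hC i, h1]
    simp [Matrix.add_apply, Matrix.smul_apply, smul_eq_mul]
  calc ∑ i, f (hC.eigenvalues i)
      ≤ ∑ i, (a * f ((star U * A * U) i i) + b * f ((star U * B * U) i i)) := by
        refine Finset.sum_le_sum fun i _ => ?_
        rw [hCeig i]
        have := hconv.2 (Set.mem_univ ((star U * A * U) i i))
          (Set.mem_univ ((star U * B * U) i i)) ha hb hab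
        simpa [smul_eq_mul] using this
    _ = a * ∑ i, f ((star U * A * U) i i) + b * ∑ i, f ((star U * B * U) i i) := by
        rw [Finset.sum_add_distrib, Finset.mul_sum, Finset.mul_sum]
    _ ≤ a * ∑ i, f (hA.eigenvalues i) + b * ∑ i, f (hB.eigenvalues i) :=
        add_le_add (mul_le_mul_of_nonneg_left (jensen_diag hconv hA hU) ha)
          (mul_le_mul_of_nonneg_left (jensen_diag hconv hB hU) hb)

open scoped Classical in
private lemma frobSq_le_two_symSq {A : Matrix (Fin n) (Fin n) ℝ} (hA : A.IsHermitian) :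
    frobSq A ≤ 2 * (symEuclNorm A) ^ 2 := by
  have hsymm : ∀ i j : Fin n, A j i = A i j := by
    intro i j
    simpa using hA.apply i j
  rw [symEuclNorm, Real.sq_sqrt (by positivity)]
  have hsplit : frobSq A
      = (∑ q ∈ Finset.univ.filter (fun q : Fin n × Fin n => q.1 ≤ q.2), (A q.1 q.2) ^ 2)
        + ∑ q ∈ Finset.univ.filter (fun q : Fin n × Fin n => ¬ q.1 ≤ q.2), (A q.1 q.2) ^ 2 := by
    rw [Finset.sum_filter_add_sum_filter_not]
    rw [frobSq, ← Finset.sum_product']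
    rfl
  have hswap : ∑ q ∈ Finset.univ.filter (fun q : Fin n × Fin n => ¬ q.1 ≤ q.2), (A q.1 q.2) ^ 2
      ≤ ∑ q ∈ Finset.univ.filter (fun q : Fin n × Fin n => q.1 ≤ q.2), (A q.1 q.2) ^ 2 := by
    have := Finset.sum_le_sum_of_subset_of_nonneg
      (s := (Finset.univ.filter (fun q : Fin n × Fin n => ¬ q.1 ≤ q.2)).image Prod.swap)
      (t := Finset.univ.filter (fun q : Fin n × Fin n => q.1 ≤ q.2))
      (f := fun q : Fin n × Fin n => (A q.1 q.2) ^ 2)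
      (by
        intro q hq
        simp only [Finset.mem_image, Finset.mem_filter, Finset.mem_univ, true_and] at hq ⊢
        obtain ⟨r, hr, hrq⟩ := hq
        subst hrq
        exact le_of_lt (lt_of_not_ge hr))
      (fun _ _ _ => sq_nonneg _)
    refine le_trans (le_of_eq ?_) this
    rw [Finset.sum_image]
    · refine Finset.sum_congr rfl fun q _ => ?_
      simp [hsymm]
    · intro x _ y _ h
      exact Prod.swap_injective h
  linarith

end Aux

theorem specInt_comp_linear_convex_lipschitz (m n p : ℕ) (hm : 0 < m) (hn : 0 < n)
    (M : EuclideanSpace ℝ (Fin m × Fin p) → Matrix (Fin n) (Fin n) ℝ)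
    (hsym : ∀ y, (M y).IsHermitian)
    (hlin : IsLinearMap ℝ M)
    (C : ℝ) (hlipM : ∀ y z, symEuclNorm (M y - M z) ≤ C * dist y z)
    (f : ℝ → ℝ) (L : ℝ≥0)
    (hconv : ConvexOn ℝ Set.univ f) (hlip : LipschitzWith L f) :
    ConvexOn ℝ Set.univ (fun y => specInt ((Real.sqrt m)⁻¹ • M y) f) ∧
      QuasiconvexOn ℝ Set.univ (fun y => specInt ((Real.sqrt m)⁻¹ • M y) f) ∧
      ∀ y z, |specInt ((Real.sqrt m)⁻¹ • M y) f - specInt ((Real.sqrt m)⁻¹ • M z) f|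
        ≤ Real.sqrt (2 / ((n : ℝ) * m)) * C * (L : ℝ) * dist y z := by
  have hAH : ∀ y, ((Real.sqrt m)⁻¹ • M y).IsHermitian := fun y => herm_smul (hsym y)
  have hspec : ∀ y, specInt ((Real.sqrt m)⁻¹ • M y) f
      = (∑ i, f ((hAH y).eigenvalues i)) / n := by
    intro y
    rw [specInt, dif_pos (hAH y), Fintype.card_fin]
  have hnR : (0 : ℝ) < n := by exact_mod_cast hn
  have hmR : (0 : ℝ) < m := by exact_mod_cast hm
  have hconvT : ConvexOn ℝ Set.univ (fun y => specInt ((Real.sqrt m)⁻¹ • M y) f) := by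
    refine ⟨convex_univ, ?_⟩
    intro y _ z _ a b ha hb hab
    have hmat : (Real.sqrt m)⁻¹ • M (a • y + b • z)
        = a • ((Real.sqrt m)⁻¹ • M y) + b • ((Real.sqrt m)⁻¹ • M z) := by
      rw [hlin.map_add, hlin.map_smul, hlin.map_smul, smul_add,
        smul_comm ((Real.sqrt (m : ℝ))⁻¹) a, smul_comm ((Real.sqrt (m : ℝ))⁻¹) b]
    have hC : (a • ((Real.sqrt m)⁻¹ • M y) + b • ((Real.sqrt m)⁻¹ • M z)).IsHermitian :=
      (herm_smul (hAH y)).add (herm_smul (hAH z))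
    have hkey := sum_f_combo hconv (hAH y) (hAH z) ha hb hab hC
    simp only [smul_eq_mul]
    rw [hspec y, hspec z]
    have : specInt ((Real.sqrt m)⁻¹ • M (a • y + b • z)) f
        = (∑ i, f (hC.eigenvalues i)) / n := by
      rw [hmat, specInt, dif_pos hC, Fintype.card_fin]
    rw [this,
      show a * ((∑ i, f ((hAH y).eigenvalues i)) / (n : ℝ))
          + b * ((∑ i, f ((hAH z).eigenvalues i)) / (n : ℝ))
        = (a * ∑ i, f ((hAH y).eigenvalues i) + b * ∑ i, f ((hAH z).eigenvalues i)) / (n : ℝ)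
        from by ring]
    exact (div_le_div_iff_of_pos_right hnR).mpr hkey
  refine ⟨hconvT, hconvT.quasiconvexOn, ?_⟩
  intro y z
  rw [hspec y, hspec z]
  set SA := ∑ i, f ((hAH y).eigenvalues i) with hSA
  set SB := ∑ i, f ((hAH z).eigenvalues i) with hSB
  set D : Matrix (Fin n) (Fin n) ℝ := (Real.sqrt m)⁻¹ • M y - (Real.sqrt m)⁻¹ • M z with hD
  have h1 : SA ≤ SB + L * (Real.sqrt n * Real.sqrt (frobSq D)) :=
    sum_f_le hconv hlip (hAH y) (hAH z)
  have h2 : SB ≤ SA + L * (Real.sqrt n * Real.sqrt (frobSq D)) := by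
    have := sum_f_le hconv hlip (hAH z) (hAH y)
    rwa [show (Real.sqrt (m : ℝ))⁻¹ • M z - (Real.sqrt (m : ℝ))⁻¹ • M y = -D by
        rw [hD, neg_sub],
      frobSq_neg] at this
  have habs : |SA - SB| ≤ L * (Real.sqrt n * Real.sqrt (frobSq D)) := by
    rw [abs_sub_le_iff]
    constructor <;> linarith
  set cd : ℝ := C * dist y z with hcd
  have hcd0 : 0 ≤ cd := le_trans (Real.sqrt_nonneg _) (hlipM y z)
  have hfD : frobSq D ≤ (2 / (m : ℝ)) * cd ^ 2 := by
    have hDeq : D = (Real.sqrt m)⁻¹ • (M y - M z) := by rw [hD, smul_sub]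
    rw [hDeq, frobSq_smul]
    have hsm : ((Real.sqrt m)⁻¹) ^ 2 = (m : ℝ)⁻¹ := by
      rw [← Real.sqrt_sq (le_of_lt hmR)] at *
      rw [inv_pow, Real.sq_sqrt (le_of_lt hmR)]
    rw [hsm]
    have hsub : frobSq (M y - M z) ≤ 2 * cd ^ 2 := by
      have := frobSq_le_two_symSq ((hsym y).sub (hsym z))
      have hse : (symEuclNorm (M y - M z)) ^ 2 ≤ cd ^ 2 :=
        pow_le_pow_left₀ (Real.sqrt_nonneg _) (hlipM y z) 2
      nlinarith
    calc (m : ℝ)⁻¹ * frobSq (M y - M z) ≤ (m : ℝ)⁻¹ * (2 * cd ^ 2) := by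
          apply mul_le_mul_of_nonneg_left hsub
          positivity
      _ = (2 / (m : ℝ)) * cd ^ 2 := by ring
  have hsqf : Real.sqrt (frobSq D) ≤ Real.sqrt (2 / (m : ℝ)) * cd := by
    calc Real.sqrt (frobSq D) ≤ Real.sqrt ((2 / (m : ℝ)) * cd ^ 2) := Real.sqrt_le_sqrt hfD
      _ = Real.sqrt (2 / (m : ℝ)) * cd := by
          rw [Real.sqrt_mul (by positivity), Real.sqrt_sq hcd0]
  have hL : (0 : ℝ) ≤ L := L.coe_nonneg
  have hfinal : |SA / n - SB / n| ≤ L * (Real.sqrt n * (Real.sqrt (2 / (m : ℝ)) * cd)) / n := by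
    rw [div_sub_div_same, abs_div, abs_of_pos hnR]
    refine (div_le_div_iff_of_pos_right hnR).mpr ?_
    calc |SA - SB| ≤ L * (Real.sqrt n * Real.sqrt (frobSq D)) := habs
      _ ≤ L * (Real.sqrt n * (Real.sqrt (2 / (m : ℝ)) * cd)) := by
          apply mul_le_mul_of_nonneg_left _ hL
          exact mul_le_mul_of_nonneg_left hsqf (Real.sqrt_nonneg _)
  refine hfinal.trans (le_of_eq ?_)
  have hsn : Real.sqrt n * Real.sqrt n = (n : ℝ) := Real.mul_self_sqrt (le_of_lt hnR)
  have e1 : Real.sqrt (2 / ((n : ℝ) * m)) = Real.sqrt (2 / (m : ℝ)) / Real.sqrt n := by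
    rw [show (2 : ℝ) / ((n : ℝ) * m) = (2 / (m : ℝ)) / n by field_simp]
    exact Real.sqrt_div (by positivity) _
  rw [e1, hcd]
  have hsnpos : (0 : ℝ) < Real.sqrt n := Real.sqrt_pos.mpr hnR
  field_simp
  linear_combination ((L : ℝ) * C * dist y z) * hsn
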